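/- Let S be a set of s-simplices of K and S_0 a connected component of S. Then S_0 is closed if and only if every s-simplex of K contained in V(S_0) belongs to S. -/
import Mathlib


open Finset
/-- The vertex set `V(S) = ⋃ S` of a set `S` of simplices. -/
def vertSet {V : Type*} (S : Set (Finset V)) : Set V := ⋃ σ ∈ S, (σ : Set V)

/-- A set `S` of s-simplices of `K` is closed if it contains every s-simplex of `K`
whose vertices all lie in `V(S)`. -/
def IsClosedSet {V : Type*} (K : Finset (Finset V)) (s : ℕ) (S : Set (Finset V)) : Prop :=
  ∀ σ ∈ K, σ.card = s + 1 → (σ : Set V) ⊆ vertSet S → σ ∈ S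

/-- The relation on simplices of `S` of having nonempty intersection. -/
def simpRel {V : Type*} [DecidableEq V] (S : Set (Finset V)) (a b : Finset V) : Prop :=
  a ∈ S ∧ b ∈ S ∧ (a ∩ b).Nonempty

/-- `S0` is a connected component of `S`: an equivalence class of the smallest
equivalence relation on `S` generated by nonempty pairwise intersection. -/
def IsComponent {V : Type*} [DecidableEq V] (S S0 : Set (Finset V)) : Prop :=
  ∃ σ₀ ∈ S, S0 = {τ | τ ∈ S ∧ Relation.EqvGen (simpRel S) σ₀ τ}

/-- The set of s-simplices of `K`, as a set. -/
def sSimplices {V : Type*} (K : Finset (Finset V)) (s : ℕ) : Set (Finset V) :=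
  {σ : Finset V | σ ∈ K ∧ σ.card = s + 1}

/-- The s-chromatic lattice: subsets of `F^s(K)` all of whose connected components
are closed. -/
def LsK {V : Type*} [DecidableEq V] (K : Finset (Finset V)) (s : ℕ) : Set (Set (Finset V)) :=
  {S | S ⊆ sSimplices K s ∧ ∀ S0, IsComponent S S0 → IsClosedSet K s S0}

/-- a connected component `S0` of a set `S` of s-simplices is closed
iff every s-simplex of `K` contained in `V(S0)` belongs to `S`. -/
theorem stmt_5 {V : Type*} [Fintype V] [DecidableEq V]
    (K : Finset (Finset V)) (hK : ∀ σ ∈ K, ∀ τ, τ ⊆ σ → τ ∈ K) (s : ℕ)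
    (S S0 : Set (Finset V)) (hS : S ⊆ sSimplices K s) (h0 : IsComponent S S0) :
    IsClosedSet K s S0 ↔
      ∀ σ ∈ K, σ.card = s + 1 → (σ : Set V) ⊆ vertSet S0 → σ ∈ S := by

  obtain ⟨σ₀, hσ₀S, hS0⟩ := h0
  have hsub : S0 ⊆ S := by rintro τ hτ; rw [hS0] at hτ; exact hτ.1
  constructor
  · intro hcl σ hσK hcard hsubV
    exact hsub (hcl σ hσK hcard hsubV)
  · intro h σ hσK hcard hsubV
    have hσS : σ ∈ S := h σ hσK hcard hsubV
    have hne : σ.Nonempty := Finset.card_pos.mp (by omega)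
    obtain ⟨v, hv⟩ := hne
    have hvV : v ∈ vertSet S0 := hsubV hv
    simp only [vertSet, Set.mem_iUnion] at hvV
    obtain ⟨τ, hτ0, hvτ⟩ := hvV
    have hτeq : τ ∈ S ∧ Relation.EqvGen (simpRel S) σ₀ τ := by rw [hS0] at hτ0; exact hτ0
    rw [hS0]
    refine ⟨hσS, hτeq.2.trans _ _ _ (Relation.EqvGen.rel _ _ ⟨hτeq.1, hσS, ⟨v, Finset.mem_inter.mpr ⟨hvτ, hv⟩⟩⟩)⟩
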